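/- Let (G,X) be a strongly marked group with Property D. Let x, y ∈ X with x ≠ y, a, b nonzero exponents, and m ≥ 3 odd. If xy ≠ yx, \overline{[x^a,y^b]}_m = \overline{[y^b,x^a]}_m and lg_{S(X)}(\overline{[x^a,y^b]}_m) = m, then either x has order 2 (and a = 1) or y has order 2 (and b = 1). -/

import Mathlib

namespace Paper

/-- The alternating list `(a, b, a, b, ...)` of length `m`. -/
def altList {α : Type*} (a b : α) : ℕ → List α
  | 0 => []
  | n + 1 => a :: altList b a n

/-- The alternating product `a b a ⋯` of length `m` in a monoid. -/
def altProd {G : Type*} [Monoid G] (a b : G) (m : ℕ) : G := (altList a b m).prod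

variable {G : Type*} [Group G]

/-- The set of syllables of a generating set `X`: nontrivial powers of elements of `X`. -/
def Syll (X : Set G) : Set G := {s | ∃ x ∈ X, ∃ a : ℤ, s = x ^ a ∧ s ≠ 1}

/-- A syllabic word: a list all of whose entries are syllables. -/
def SylWord (X : Set G) (w : List G) : Prop := ∀ s ∈ w, s ∈ Syll X

/-- The syllabic length of an element: minimal length of a syllabic word representing it. -/
noncomputable def sylLen (X : Set G) (g : G) : ℕ :=
  sInf {n | ∃ w : List G, SylWord X w ∧ w.prod = g ∧ w.length = n}

/-- A syllabic word is reduced if its length is the syllabic length of the element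
it represents. -/
def Reduced (X : Set G) (w : List G) : Prop :=
  SylWord X w ∧ w.length = sylLen X w.prod

/-- Elementary M-operation of type I. -/
def MOpI (X : Set G) (w w' : List G) : Prop :=
  ∃ (w₁ w₂ : List G) (s t : G), s ∈ Syll X ∧ t ∈ Syll X ∧
    w = w₁ ++ [s, t] ++ w₂ ∧
    ((s * t ∈ Syll X ∧ w' = w₁ ++ [s * t] ++ w₂) ∨ (s * t = 1 ∧ w' = w₁ ++ w₂))

/-- Elementary M-operation of type II. -/
def MOpII (X : Set G) (w w' : List G) : Prop :=
  ∃ (w₁ w₂ : List G) (s t : G) (m : ℕ), s ∈ Syll X ∧ t ∈ Syll X ∧ 2 ≤ m ∧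
    altProd s t m = altProd t s m ∧ sylLen X (altProd s t m) = m ∧
    w = w₁ ++ altList s t m ++ w₂ ∧ w' = w₁ ++ altList t s m ++ w₂

/-- Elementary M-operation (of type I or type II). -/
def MOp (X : Set G) (w w' : List G) : Prop := MOpI X w w' ∨ MOpII X w w'

/-- A syllabic word is M-reduced if its length cannot be shortened by any finite
sequence of elementary M-operations. -/
def MReduced (X : Set G) (w : List G) : Prop :=
  ∀ w', Relation.ReflTransGen (MOp X) w w' → ¬ w'.length < w.length

/-- Property D: a syllabic word is reduced iff it is M-reduced, and any two reduced
syllabic words representing the same element are connected by a finite sequence of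
elementary M-operations of type II. -/
def PropertyD (X : Set G) : Prop :=
  (∀ w : List G, SylWord X w → (Reduced X w ↔ MReduced X w)) ∧
  (∀ w w' : List G, Reduced X w → Reduced X w' → w.prod = w'.prod →
    Relation.ReflTransGen (MOpII X) w w')

/-- `(G, X)` is a marked group: `X` generates `G`. -/
def Marked (X : Set G) : Prop := Subgroup.closure X = ⊤

/-- `(G, X)` is a strongly marked group. -/
def StronglyMarked (X : Set G) : Prop :=
  Marked X ∧ (1 : G) ∉ X ∧
    ∀ x ∈ X, ∀ y ∈ X, ∀ a b : ℤ, x ^ a ≠ 1 → y ^ b ≠ 1 →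
      (x ^ a * y ^ b ∈ Syll X ∨ x ^ a * y ^ b = 1) → x = y

/-- The data of a Dyer graph: a simplicial graph with edge labels `m ≥ 2` and vertex
labels `f ∈ ℕ_{≥2} ∪ {∞}` such that any edge with `m(e) ≠ 2` has both endpoints
labelled `2`. -/
structure DyerData (V : Type*) where
  adj : V → V → Prop
  symm : ∀ u v, adj u v → adj v u
  loopless : ∀ v, ¬ adj v v
  m : V → V → ℕ
  m_symm : ∀ u v, m u v = m v u
  m_two_le : ∀ u v, adj u v → 2 ≤ m u v
  f : V → ℕ∞
  f_two_le : ∀ v, 2 ≤ f v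
  dyer : ∀ u v, adj u v → m u v ≠ 2 → f u = 2 ∧ f v = 2

/-- The defining relators of the Dyer group of `Δ`. -/
def DyerData.rels {V : Type*} (Δ : DyerData V) : Set (FreeGroup V) :=
  {r | ∃ v, Δ.f v ≠ ⊤ ∧ r = (FreeGroup.of v) ^ (Δ.f v).toNat} ∪
  {r | ∃ u v, Δ.adj u v ∧
    r = altProd (FreeGroup.of u) (FreeGroup.of v) (Δ.m u v) *
        (altProd (FreeGroup.of v) (FreeGroup.of u) (Δ.m u v))⁻¹}

/-- The Dyer group of the data `Δ`. -/
abbrev DyerGroup {V : Type*} (Δ : DyerData V) := PresentedGroup Δ.rels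

/-- The standard generating set of a Dyer group. -/
def DyerGens {V : Type*} (Δ : DyerData V) : Set (DyerGroup Δ) :=
  Set.range (PresentedGroup.of (rels := Δ.rels))


section Helpers

variable {G : Type*} [Group G] {X : Set G}

lemma altList_length {α : Type*} (a b : α) : ∀ n, (altList a b n).length = n
  | 0 => rfl
  | n + 1 => by simp [altList, altList_length _ _ n]

lemma altList_get? {α : Type*} :
    ∀ (n j : ℕ) (a b : α), j < n → (altList a b n)[j]? = some (if Even j then a else b)
  | 0, j, a, b, h => by omega
  | n + 1, 0, a, b, h => by simp [altList]
  | n + 1, j + 1, a, b, h => by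
      have ih := altList_get? n j b a (by omega)
      simp only [altList, List.getElem?_cons_succ, ih, Nat.even_add_one]
      by_cases hj : Even j <;> simp [hj]

lemma altList_concat {α : Type*} :
    ∀ (n : ℕ) (a b : α), altList a b (n + 1) = altList a b n ++ [if Even n then a else b]
  | 0, a, b => by simp [altList]
  | n + 1, a, b => by
      have ih := altList_concat n b a
      show a :: altList b a (n + 1) = (a :: altList b a n) ++ [if Even (n + 1) then a else b]
      rw [ih]
      have : (if Even n then b else a) = (if Even (n + 1) then a else b) := by
        by_cases hn : Even n
        · rw [if_pos hn, if_neg (by simp [Nat.even_add_one, hn])]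
        · rw [if_neg hn, if_pos (Nat.even_add_one.mpr hn)]
      rw [this]
      simp

lemma mem_altList {α : Type*} :
    ∀ (n : ℕ) (a b c : α), c ∈ altList a b n → c = a ∨ c = b
  | 0, a, b, c, h => by simp [altList] at h
  | n + 1, a, b, c, h => by
      rcases List.mem_cons.1 h with h | h
      · exact Or.inl h
      · exact (mem_altList n b a c h).symm

lemma head_mem_altList {α : Type*} (a b : α) (n : ℕ) (h : 1 ≤ n) : a ∈ altList a b n := by
  obtain ⟨r, rfl⟩ : ∃ r, n = r + 1 := ⟨n - 1, by omega⟩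
  exact List.mem_cons_self

lemma snd_mem_altList {α : Type*} (a b : α) (n : ℕ) (h : 2 ≤ n) : b ∈ altList a b n := by
  obtain ⟨r, rfl⟩ : ∃ r, n = r + 1 + 1 := ⟨n - 2, by omega⟩
  show b ∈ a :: b :: altList a b r
  simp

lemma altProd_succ (a b : G) (n : ℕ) : altProd a b (n + 1) = a * altProd b a n := by
  simp [altProd, altList]

lemma altProd_concat (a b : G) (n : ℕ) :
    altProd a b (n + 1) = altProd a b n * (if Even n then a else b) := by
  simp [altProd, altList_concat n a b]

lemma altProd_two (a b : G) : altProd a b 2 = a * b := by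
  simp [altProd, altList]

lemma altProd_even (a b : G) : ∀ j : ℕ, altProd a b (2 * j) = (a * b) ^ j
  | 0 => by simp [altProd, altList]
  | j + 1 => by
      have h1 : 2 * (j + 1) = (2 * j + 1) + 1 := by omega
      rw [h1, altProd_concat, altProd_concat, altProd_even a b j]
      have h2 : ¬ Even (2 * j + 1) := by simp [Nat.even_add_one]
      have h3 : Even (2 * j) := ⟨j, by omega⟩
      rw [if_neg h2, if_pos h3, pow_succ, mul_assoc]

lemma altProd_odd (a b : G) (j : ℕ) : altProd a b (2 * j + 1) = (a * b) ^ j * a := by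
  rw [altProd_concat, altProd_even, if_pos ⟨j, by omega⟩]

@[simp] lemma altProd_eq {a b : G} {n : ℕ} : (altList a b n).prod = altProd a b n := rfl

lemma sylWord_altList {a b : G} (ha : a ∈ Syll X) (hb : b ∈ Syll X) (n : ℕ) :
    SylWord X (altList a b n) := by
  intro c hc
  rcases mem_altList n a b c hc with rfl | rfl <;> assumption

lemma sylWord_append {w₁ w₂ : List G} (h1 : SylWord X w₁) (h2 : SylWord X w₂) :
    SylWord X (w₁ ++ w₂) := by
  intro c hc
  rcases List.mem_append.1 hc with h | h
  · exact h1 c h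
  · exact h2 c h

lemma sylWord_cons {c : G} {w : List G} (hc : c ∈ Syll X) (h : SylWord X w) :
    SylWord X (c :: w) := by
  intro d hd
  rcases List.mem_cons.1 hd with rfl | hd
  · exact hc
  · exact h d hd

lemma sylWord_singleton {c : G} (hc : c ∈ Syll X) : SylWord X [c] := by
  intro d hd; rcases List.mem_singleton.1 hd with rfl; exact hc

lemma sylLen_le {w : List G} {g : G} (hw : SylWord X w) (hp : w.prod = g) :
    sylLen X g ≤ w.length :=
  Nat.sInf_le ⟨w, hw, hp, rfl⟩

lemma exists_reduced {g : G} (w : List G) (hw : SylWord X w) (hp : w.prod = g) :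
    ∃ D : List G, SylWord X D ∧ D.prod = g ∧ D.length = sylLen X g := by
  have hne : {n | ∃ w : List G, SylWord X w ∧ w.prod = g ∧ w.length = n}.Nonempty :=
    ⟨w.length, w, hw, hp, rfl⟩
  obtain ⟨D, hD, hDp, hDl⟩ := Nat.sInf_mem hne
  exact ⟨D, hD, hDp, hDl⟩

lemma MOpII_prod {w w' : List G} (h : MOpII X w w') : w.prod = w'.prod := by
  obtain ⟨w₁, w₂, s, t, n, hs, ht, hn, hrel, hsyl, hw, hw'⟩ := h
  subst hw hw'
  simp only [List.prod_append]
  have : (altList s t n).prod = (altList t s n).prod := hrel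
  rw [this]

lemma MOpII_length {w w' : List G} (h : MOpII X w w') : w.length = w'.length := by
  obtain ⟨w₁, w₂, s, t, n, hs, ht, hn, hrel, hsyl, hw, hw'⟩ := h
  subst hw hw'
  simp [altList_length]

lemma MOpII_mem {w w' : List G} (h : MOpII X w w') : ∀ c, c ∈ w ↔ c ∈ w' := by
  obtain ⟨w₁, w₂, s, t, n, hs, ht, hn, hrel, hsyl, hw, hw'⟩ := h
  subst hw hw'
  intro c
  simp only [List.mem_append]
  constructor <;> rintro ((h | h) | h)
  · exact Or.inl (Or.inl h)
  · rcases mem_altList _ _ _ _ h with rfl | rfl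
    · exact Or.inl (Or.inr (snd_mem_altList t c n hn))
    · exact Or.inl (Or.inr (head_mem_altList c s n (by omega)))
  · exact Or.inr h
  · exact Or.inl (Or.inl h)
  · rcases mem_altList _ _ _ _ h with rfl | rfl
    · exact Or.inl (Or.inr (snd_mem_altList s c n hn))
    · exact Or.inl (Or.inr (head_mem_altList c t n (by omega)))
  · exact Or.inr h

lemma chain_mem {w w' : List G} (h : Relation.ReflTransGen (MOpII X) w w') :
    ∀ c, c ∈ w ↔ c ∈ w' := by
  induction h with
  | refl => exact fun c => Iff.rfl
  | tail _ hstep ih => exact fun c => (ih c).trans (MOpII_mem hstep c)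

lemma entries_eq (hPD : PropertyD X) {w w' : List G} (h : Reduced X w) (h' : Reduced X w')
    (hp : w.prod = w'.prod) : ∀ c, c ∈ w ↔ c ∈ w' :=
  chain_mem (hPD.2 w w' h h' hp)

lemma merge_not_min (hPD : PropertyD X) (w₁ w₂ : List G) (p q : G)
    (hw : SylWord X (w₁ ++ [p, q] ++ w₂)) (hpq : p * q ∈ Syll X ∨ p * q = 1) :
    sylLen X (w₁ ++ [p, q] ++ w₂).prod ≠ (w₁ ++ [p, q] ++ w₂).length := by
  intro he
  have hp : p ∈ Syll X := hw p (by simp)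
  have hq : q ∈ Syll X := hw q (by simp)
  have hred : Reduced X (w₁ ++ [p, q] ++ w₂) := ⟨hw, he.symm⟩
  have hMred : MReduced X (w₁ ++ [p, q] ++ w₂) := (hPD.1 _ hw).1 hred
  rcases hpq with hpq | hpq
  · refine hMred (w₁ ++ [p * q] ++ w₂)
      (Relation.ReflTransGen.single (Or.inl ⟨w₁, w₂, p, q, hp, hq, rfl, Or.inl ⟨hpq, rfl⟩⟩)) ?_
    simp
  · refine hMred (w₁ ++ w₂)
      (Relation.ReflTransGen.single (Or.inl ⟨w₁, w₂, p, q, hp, hq, rfl, Or.inr ⟨hpq, rfl⟩⟩)) ?_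
    simp

lemma exists_mop (hPD : PropertyD X) {w : List G} (hw : SylWord X w)
    (hne : sylLen X w.prod ≠ w.length) : ∃ w', MOp X w w' := by
  have hnred : ¬ Reduced X w := fun h => hne h.2.symm
  have hnM : ¬ MReduced X w := fun h => hnred ((hPD.1 w hw).2 h)
  simp only [MReduced, not_forall, not_not] at hnM
  obtain ⟨w', hchain, _⟩ := hnM
  rcases Relation.ReflTransGen.cases_head hchain with rfl | ⟨c, hc, _⟩
  · omega
  · exact ⟨c, hc⟩

lemma block_get {L w₁ w₂ bl : List G} (h : L = w₁ ++ bl ++ w₂) (j : ℕ) (hj : j < bl.length) :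
    L[w₁.length + j]? = bl[j]? := by
  subst h
  rw [List.append_assoc, List.getElem?_append_right (by omega),
    Nat.add_sub_cancel_left, List.getElem?_append_left hj]

end Helpers
set_option maxHeartbeats 1000000 in
theorem statement_3 {G : Type*} [Group G] {X : Set G}
    (hSM : StronglyMarked X) (hPD : PropertyD X)
    {x y : G} (hx : x ∈ X) (hy : y ∈ X) (hxy : x ≠ y)
    {a b : ℤ} (ha : x ^ a ≠ 1) (hb : y ^ b ≠ 1)
    {m : ℕ} (hm : 3 ≤ m) (hmodd : Odd m) (hnc : x * y ≠ y * x)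
    (halt : altProd (x ^ a) (y ^ b) m = altProd (y ^ b) (x ^ a) m)
    (hlen : sylLen X (altProd (x ^ a) (y ^ b) m) = m) :
    (orderOf x = 2 ∧ a ≡ 1 [ZMOD (2 : ℤ)]) ∨ (orderOf y = 2 ∧ b ≡ 1 [ZMOD (2 : ℤ)]) := by
  classical
  obtain ⟨k, rfl⟩ := hmodd
  obtain ⟨hMark, h1X, hAx⟩ := hSM
  have hk1 : 1 ≤ k := by omega
  have hx1 : x ≠ 1 := fun h => h1X (h ▸ hx)
  have hy1 : y ≠ 1 := fun h => h1X (h ▸ hy)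
  -- strongly marked killers
  have SMk : ∀ α β : ℤ, x ^ α ≠ 1 → y ^ β ≠ 1 →
      ¬ (x ^ α * y ^ β ∈ Syll X ∨ x ^ α * y ^ β = 1) :=
    fun α β h1 h2 h => hxy (hAx x hx y hy α β h1 h2 h)
  have SMk' : ∀ β α : ℤ, y ^ β ≠ 1 → x ^ α ≠ 1 →
      ¬ (y ^ β * x ^ α ∈ Syll X ∨ y ^ β * x ^ α = 1) :=
    fun β α h2 h1 h => hxy (hAx y hy x hx β α h2 h1 h).symm
  set s := x ^ a with hs_def
  set t := y ^ b with ht_def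
  set g := altProd s t (2 * k + 1) with hg_def
  have hsS : s ∈ Syll X := ⟨x, hx, a, rfl, ha⟩
  have htS : t ∈ Syll X := ⟨y, hy, b, rfl, hb⟩
  have hsinvS : s⁻¹ ∈ Syll X := ⟨x, hx, -a, by rw [hs_def, zpow_neg], inv_ne_one.mpr ha⟩
  have htinvS : t⁻¹ ∈ Syll X := ⟨y, hy, -b, by rw [ht_def, zpow_neg], inv_ne_one.mpr hb⟩
  have hEk : Even (2 * k) := ⟨k, by omega⟩
  have hnEk1 : ¬ Even (2 * k + 1) := by rw [Nat.even_add_one]; exact not_not_intro hEk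
  -- basic expressions for g
  have hgw : (altList s t (2 * k + 1)).prod = g := rfl
  have hgw' : (altList t s (2 * k + 1)).prod = g := halt.symm
  have hg1 : g = s * altProd t s (2 * k) := by rw [hg_def]; exact altProd_succ s t (2 * k)
  have hg2 : g = altProd t s (2 * k) * t := by
    rw [halt, altProd_concat t s (2 * k), if_pos hEk]
  have hsg : s * g = altProd s t (2 * k + 2) := by
    rw [halt]; exact (altProd_succ s t (2 * k + 1)).symm
  have hgt : g * t = altProd s t (2 * k + 2) := by
    rw [hg_def, altProd_concat s t (2 * k + 1), if_neg hnEk1]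
  have hsg_gt : s * g = g * t := hsg.trans hgt.symm
  -- the two canonical reduced words for g
  have hred_w : Reduced X (altList s t (2 * k + 1)) :=
    ⟨sylWord_altList hsS htS _, by rw [altList_length, hgw]; exact hlen.symm⟩
  have hred_w' : Reduced X (altList t s (2 * k + 1)) :=
    ⟨sylWord_altList htS hsS _, by rw [altList_length, hgw']; exact hlen.symm⟩
  have gval : ∀ D : List G, Reduced X D → D.prod = g → ∀ c ∈ D, c = s ∨ c = t := by
    intro D hD hDp c hc
    exact mem_altList _ _ _ _
      (((entries_eq hPD hD hred_w (by rw [hDp, hgw])) c).1 hc)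
  -- ### Foundation: s * s = 1 and t * t = 1
  have hss_eq : s * s = x ^ (a + a) := by rw [hs_def, zpow_add]
  have htt_eq : t * t = y ^ (b + b) := by rw [ht_def, zpow_add]
  have hword1 : SylWord X ([s, s] ++ altList t s (2 * k)) :=
    sylWord_append (sylWord_cons hsS (sylWord_singleton hsS)) (sylWord_altList htS hsS _)
  have hprod1 : ([s, s] ++ altList t s (2 * k)).prod = s * g := by
    simp only [List.prod_append, List.prod_cons, List.prod_singleton, List.prod_nil,
      mul_one, altProd_eq]
    rw [hg1, mul_assoc]
  have hle1 : sylLen X (s * g) ≤ 2 * k + 2 := by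
    have := sylLen_le hword1 hprod1
    simpa [altList_length] using this
  have hssSyll : s * s ∈ Syll X ∨ s * s = 1 := by
    by_cases hss1 : s * s = 1
    · exact Or.inr hss1
    · exact Or.inl ⟨x, hx, a + a, hss_eq, hss1⟩
  have hne1 : sylLen X (s * g) ≠ 2 * k + 2 := by
    have h := merge_not_min hPD [] (altList t s (2 * k)) s s (by simpa using hword1) hssSyll
    simp only [List.nil_append] at h
    rw [hprod1] at h
    simpa [altList_length] using h
  have hge1 : 2 * k ≤ sylLen X (s * g) := by
    obtain ⟨D, hD, hDp, hDl⟩ := exists_reduced _ hword1 hprod1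
    have hle : sylLen X g ≤ D.length + 1 := by
      have hw : SylWord X (s⁻¹ :: D) := sylWord_cons hsinvS hD
      have hp : (s⁻¹ :: D).prod = g := by
        rw [List.prod_cons, hDp, inv_mul_cancel_left]
      simpa using sylLen_le hw hp
    rw [hlen] at hle
    omega
  have hlow : sylLen X (altProd t s (2 * k)) ≤ 2 * k := by
    have := sylLen_le (sylWord_altList htS hsS (2 * k)) rfl
    simpa [altList_length] using this
  have hnot_m : sylLen X (s * g) ≠ 2 * k + 1 := by
    intro hsl
    by_cases hss1 : s * s = 1
    · have heq : s * g = altProd t s (2 * k) := by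
        rw [hg1, ← mul_assoc, hss1, one_mul]
      rw [heq] at hsl; omega
    by_cases htt1 : t * t = 1
    · have heq : s * g = altProd t s (2 * k) := by
        rw [hsg_gt, hg2, mul_assoc, htt1, mul_one]
      rw [heq] at hsl; omega
    -- both squares nontrivial: entry-set contradiction
    have hssS : s * s ∈ Syll X := ⟨x, hx, a + a, hss_eq, hss1⟩
    have httS : t * t ∈ Syll X := ⟨y, hy, b + b, htt_eq, htt1⟩
    have hBw : SylWord X ((s * s) :: altList t s (2 * k)) :=
      sylWord_cons hssS (sylWord_altList htS hsS _)
    have hBp : ((s * s) :: altList t s (2 * k)).prod = s * g := by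
      simp only [List.prod_cons, altProd_eq]
      rw [hg1, mul_assoc]
    have hCw : SylWord X (altList t s (2 * k) ++ [t * t]) :=
      sylWord_append (sylWord_altList htS hsS _) (sylWord_singleton httS)
    have hCp : (altList t s (2 * k) ++ [t * t]).prod = s * g := by
      simp only [List.prod_append, List.prod_singleton, altProd_eq]
      rw [hsg_gt, hg2, mul_assoc]
    have hBred : Reduced X ((s * s) :: altList t s (2 * k)) := by
      refine ⟨hBw, ?_⟩
      rw [hBp, hsl]; simp [altList_length]
    have hCred : Reduced X (altList t s (2 * k) ++ [t * t]) := by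
      refine ⟨hCw, ?_⟩
      rw [hCp, hsl]; simp [altList_length]
    have hmem : (s * s) ∈ altList t s (2 * k) ++ [t * t] :=
      ((entries_eq hPD hBred hCred (hBp.trans hCp.symm)) (s * s)).1 (by simp)
    rcases List.mem_append.1 hmem with hmem | hmem
    · rcases mem_altList _ _ _ _ hmem with heq | heq
      · -- s*s = t
        refine SMk (a + a) (-b) (by rw [← hss_eq]; exact hss1)
          (by rw [zpow_neg, ← ht_def]; exact inv_ne_one.mpr hb) (Or.inr ?_)
        rw [← hss_eq, heq, ht_def, ← zpow_add]
        simp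
      · -- s*s = s
        exact ha (mul_eq_right.mp heq)
    · -- s*s = t*t
      have heq : s * s = t * t := List.mem_singleton.1 hmem
      refine SMk (a + a) (-(b + b)) (by rw [← hss_eq]; exact hss1)
        (by rw [zpow_neg, ← htt_eq]; exact inv_ne_one.mpr htt1) (Or.inr ?_)
      rw [← hss_eq, heq, htt_eq, ← zpow_add, show b + b + -(b + b) = 0 by ring, zpow_zero]
  have hsl20 : sylLen X (s * g) = 2 * k := by omega
  obtain ⟨D₀, hD₀w, hD₀p, hD₀l⟩ := exists_reduced _ hword1 hprod1
  rw [hsl20] at hD₀l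
  have ht2 : t * t = 1 := by
    have hw : SylWord X (D₀ ++ [t⁻¹]) := sylWord_append hD₀w (sylWord_singleton htinvS)
    have hp : (D₀ ++ [t⁻¹]).prod = g := by
      rw [List.prod_append, List.prod_singleton, hD₀p, hsg_gt, mul_inv_cancel_right]
    have hred : Reduced X (D₀ ++ [t⁻¹]) := by
      refine ⟨hw, ?_⟩
      rw [hp, hlen]; simp [hD₀l]
    rcases gval _ hred hp t⁻¹ (by simp) with heq | heq
    · exfalso
      refine SMk a b ha hb (Or.inr ?_)
      rw [← hs_def, ← ht_def, ← heq, inv_mul_cancel]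
    · nth_rewrite 2 [← heq]
      exact mul_inv_cancel t
  have hs2 : s * s = 1 := by
    have hw : SylWord X (s⁻¹ :: D₀) := sylWord_cons hsinvS hD₀w
    have hp : (s⁻¹ :: D₀).prod = g := by
      rw [List.prod_cons, hD₀p, inv_mul_cancel_left]
    have hred : Reduced X (s⁻¹ :: D₀) := by
      refine ⟨hw, ?_⟩
      rw [hp, hlen]; simp [hD₀l]
    rcases gval _ hred hp s⁻¹ (by simp) with heq | heq
    · nth_rewrite 1 [← heq]
      exact inv_mul_cancel s
    · exfalso
      refine SMk a b ha hb (Or.inr ?_)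
      rw [← hs_def, ← ht_def, ← heq]
      exact mul_inv_cancel s
  -- ### dihedral facts
  have hsinv : s⁻¹ = s := inv_eq_of_mul_eq_one_right hs2
  have htinv : t⁻¹ = t := inv_eq_of_mul_eq_one_right ht2
  set z := s * t with hz_def
  have hz1 : z ≠ 1 := fun h => SMk a b ha hb (Or.inr (by rw [← hs_def, ← ht_def]; exact h))
  have hzts : t * s = z⁻¹ := by rw [hz_def, mul_inv_rev, hsinv, htinv]
  have hszs1 : s * z * s = z⁻¹ := by
    rw [hz_def]
    calc s * (s * t) * s = (s * s) * (t * s) := by group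
    _ = t * s := by rw [hs2, one_mul]
    _ = (s * t)⁻¹ := by rw [mul_inv_rev, hsinv, htinv]
  have hszs : ∀ j : ℕ, s * z ^ j * s = (z⁻¹) ^ j := by
    intro j
    induction j with
    | zero => simpa using hs2
    | succ j ih =>
      have e1 : (s * z ^ j * s) * (s * z * s) = s * z ^ (j + 1) * s := by
        rw [pow_succ]
        calc (s * z ^ j * s) * (s * z * s) = s * z ^ j * (s * s) * z * s := by group
        _ = s * z ^ j * 1 * z * s := by rw [hs2]
        _ = s * (z ^ j * z) * s := by group
      rw [← e1, ih, hszs1, pow_succ]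
  have haltst : ∀ j : ℕ, altProd s t (2 * j) = z ^ j := fun j => by
    rw [altProd_even, hz_def]
  have haltst1 : ∀ j : ℕ, altProd s t (2 * j + 1) = z ^ j * s := fun j => by
    rw [altProd_odd, hz_def]
  have haltts : ∀ j : ℕ, altProd t s (2 * j) = (z⁻¹) ^ j := fun j => by
    rw [altProd_even, ← hzts]
  have haltts1 : ∀ j : ℕ, altProd t s (2 * j + 1) = (z⁻¹) ^ j * t := fun j => by
    rw [altProd_odd, ← hzts]
  have hgz : g = z ^ k * s := by rw [hg_def, haltst1]
  have hkey : ∀ j : ℕ, z ^ j * s = (z⁻¹) ^ j * t → z ^ (2 * j + 1) = 1 := by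
    intro j hj
    rw [inv_pow] at hj
    have h2 : z ^ j * (z ^ j * s) = t := by rw [hj, mul_inv_cancel_left]
    have h3 : z ^ (2 * j) * s = t := by rw [two_mul, pow_add, mul_assoc]; exact h2
    have h4 : z ^ (2 * j) = t * s := by rw [← h3, mul_assoc, hs2, mul_one]
    rw [pow_succ, h4, hz_def]
    calc t * s * (s * t) = t * (s * s) * t := by group
    _ = t * t := by rw [hs2, mul_one]
    _ = 1 := ht2
  have hzm : z ^ (2 * k + 1) = 1 := by
    refine hkey k ?_
    rw [← haltst1, ← haltts1, ← hg_def, ← halt]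
  have hzmin : ∀ j : ℕ, 1 ≤ j → j < 2 * k + 1 → z ^ j ≠ 1 := by
    intro j hj1 hj2 hzj
    rcases eq_or_lt_of_le (show j ≤ 2 * k by omega) with rfl | hjlt
    · apply hz1
      have h := hzm
      rw [pow_succ, hzj, one_mul] at h
      exact h
    · have hk'j : k % j < j := Nat.mod_lt _ (by omega)
      have hzkk' : z ^ k = z ^ (k % j) := by
        conv_lhs => rw [show k = j * (k / j) + k % j from (Nat.div_add_mod k j).symm]
        rw [pow_add, pow_mul, hzj, one_pow, one_mul]
      by_cases hck : 2 * (k % j) + 1 < 2 * k + 1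
      · have hple : sylLen X g ≤ 2 * (k % j) + 1 := by
          refine sylLen_le (sylWord_altList hsS htS (2 * (k % j) + 1)) ?_ |>.trans ?_
          · show altProd s t (2 * (k % j) + 1) = g
            rw [haltst1, ← hzkk', ← hgz]
          · rw [altList_length]
        omega
      · have hzk'i : z ^ (k % j) * z ^ (j - k % j) = 1 := by
          rw [← pow_add, show k % j + (j - k % j) = j by omega, hzj]
        have hig : g = s * z ^ (j - k % j) := by
          rw [hgz, hzkk', eq_inv_of_mul_eq_one_left hzk'i]
          have h6 := hszs (j - k % j)
          rw [inv_pow] at h6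
          rw [← h6, mul_assoc (s * z ^ (j - k % j)) s s, hs2, mul_one]
        have hple : sylLen X g ≤ 2 * (j - k % j) + 1 := by
          refine sylLen_le (sylWord_cons hsS (sylWord_altList hsS htS (2 * (j - k % j)))) ?_ |>.trans ?_
          · show s * altProd s t (2 * (j - k % j)) = g
            rw [haltst, ← hig]
          · simp [altList_length]
        omega
  have hstne : s * t ≠ t * s := by
    intro h
    apply hzmin 2 (by omega) (by omega)
    rw [pow_two, hz_def]
    nth_rewrite 2 [h]
    calc (s * t) * (t * s) = s * (t * t) * s := by group
    _ = s * s := by rw [ht2, mul_one]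
    _ = 1 := hs2
  have hR : ∀ n, 2 ≤ n → n < 2 * k + 1 → altProd s t n ≠ altProd t s n := by
    intro n hn2 hnm heq
    rcases Nat.even_or_odd n with ⟨j, hj⟩ | ⟨j, hj⟩
    · have hj' : n = 2 * j := by omega
      rw [hj'] at heq
      rw [haltst, haltts, inv_pow] at heq
      have hz2j : z ^ (2 * j) = 1 := by
        rw [two_mul, pow_add]
        nth_rewrite 2 [heq]
        exact mul_inv_cancel _
      exact hzmin (2 * j) (by omega) (by omega) hz2j
    · have hj' : n = 2 * j + 1 := by omega
      rw [hj'] at heq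
      rw [haltst1, haltts1] at heq
      exact hzmin (2 * j + 1) (by omega) (by omega) (hkey j heq)
  -- ### reduce the goal
  haveI : Fact (Nat.Prime 2) := ⟨Nat.prime_two⟩
  suffices hor : x * x = 1 ∨ y * y = 1 by
    rcases hor with h2 | h2
    · left
      refine ⟨orderOf_eq_prime (by rw [pow_two]; exact h2) hx1, ?_⟩
      rcases Int.even_or_odd a with ⟨c, hc⟩ | ⟨c, hc⟩
      · exfalso
        apply ha
        rw [hs_def, hc, show c + c = 2 * c by ring, zpow_mul,
          show (x : G) ^ (2 : ℤ) = x * x by rw [zpow_two], h2, one_zpow]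
      · show a % 2 = 1 % 2
        omega
    · right
      refine ⟨orderOf_eq_prime (by rw [pow_two]; exact h2) hy1, ?_⟩
      rcases Int.even_or_odd b with ⟨c, hc⟩ | ⟨c, hc⟩
      · exfalso
        apply hb
        rw [ht_def, hc, show c + c = 2 * c by ring, zpow_mul,
          show (y : G) ^ (2 : ℤ) = y * y by rw [zpow_two], h2, one_zpow]
      · show b % 2 = 1 % 2
        omega
  by_contra hcon
  push_neg at hcon
  obtain ⟨hX2, hY2⟩ := hcon
  -- ### crux setup
  set u := x * s with hu_def
  have hu_pow : u = x ^ (1 + a) := by rw [hu_def, hs_def, zpow_one_add]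
  have hCxs : Commute x s := by rw [hs_def]; exact (Commute.refl x).zpow_right a
  have hu1 : u ≠ 1 := by
    intro h
    apply hX2
    rw [eq_inv_of_mul_eq_one_left h, hsinv]
    exact hs2
  have hxns : x ≠ s := by
    intro h
    apply hX2; rw [h]; exact hs2
  have huns : u ≠ s := fun h => hx1 (mul_eq_right.mp (hu_def.symm.trans h))
  have huS : u ∈ Syll X := ⟨x, hx, 1 + a, hu_pow, hu1⟩
  set v := t * y with hv_def
  have hv_pow : v = y ^ (b + 1) := by rw [hv_def, ht_def, zpow_add_one]
  have hv1 : v ≠ 1 := by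
    intro h
    apply hY2
    rw [(inv_eq_of_mul_eq_one_right h).symm, htinv]
    exact ht2
  have hvnt : v ≠ t := fun h => hy1 (mul_eq_left.mp (hv_def.symm.trans h))
  have hvS : v ∈ Syll X := ⟨y, hy, b + 1, hv_pow, hv1⟩
  have hvns : v ≠ s := by
    intro h
    refine SMk' (b + 1) (-a) (by rw [← hv_pow]; exact hv1)
      (by rw [zpow_neg, ← hs_def]; exact inv_ne_one.mpr ha) (Or.inr ?_)
    rw [← hv_pow, zpow_neg, ← hs_def, h]
    exact mul_inv_cancel s
  have hxS : x ∈ Syll X := ⟨x, hx, 1, (zpow_one x).symm, hx1⟩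
  have hyS : y ∈ Syll X := ⟨y, hy, 1, (zpow_one y).symm, hy1⟩
  have hxinvS : x⁻¹ ∈ Syll X := ⟨x, hx, -1, by rw [zpow_neg, zpow_one], inv_ne_one.mpr hx1⟩
  have hyinvS : y⁻¹ ∈ Syll X := ⟨y, hy, -1, by rw [zpow_neg, zpow_one], inv_ne_one.mpr hy1⟩
  -- sylLen (x * g) = 2k+1 and F := u :: altList t s (2k) is reduced
  have hFw : SylWord X (u :: altList t s (2 * k)) :=
    sylWord_cons huS (sylWord_altList htS hsS _)
  have hFp : (u :: altList t s (2 * k)).prod = x * g := by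
    simp only [List.prod_cons, altProd_eq]
    rw [hu_def, mul_assoc, ← hg1]
  have hxgm : sylLen X (x * g) = 2 * k + 1 := by
    refine le_antisymm (by simpa [altList_length] using sylLen_le hFw hFp) ?_
    by_contra hlt
    push_neg at hlt
    obtain ⟨D, hDw, hDp, hDl⟩ := exists_reduced _ hFw hFp
    have hp2 : (x⁻¹ :: D).prod = g := by rw [List.prod_cons, hDp, inv_mul_cancel_left]
    have hw2 : SylWord X (x⁻¹ :: D) := sylWord_cons hxinvS hDw
    have hle2 : sylLen X g ≤ D.length + 1 := by simpa using sylLen_le hw2 hp2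
    rw [hlen] at hle2
    have hDl' : D.length = 2 * k := by omega
    have hred2 : Reduced X (x⁻¹ :: D) := ⟨hw2, by rw [hp2, hlen]; simp [hDl']⟩
    rcases gval _ hred2 hp2 x⁻¹ (by simp) with heq | heq
    · apply hX2
      have hxx : x = s := by rw [← hsinv, ← heq, inv_inv]
      rw [hxx]; exact hs2
    · refine SMk (-1) (-b) (by rw [zpow_neg, zpow_one]; exact inv_ne_one.mpr hx1)
        (by rw [zpow_neg, ← ht_def]; exact inv_ne_one.mpr hb) (Or.inr ?_)
      rw [zpow_neg, zpow_one, zpow_neg, ← ht_def, heq]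
      exact mul_inv_cancel t
  have hFred : Reduced X (u :: altList t s (2 * k)) :=
    ⟨hFw, by rw [hFp, hxgm]; simp [altList_length]⟩
  -- sylLen (g * y) = 2k+1 and A₂ := altList t s (2k) ++ [v] is reduced
  have hgyv : g * y = altProd t s (2 * k) * v := by rw [hg2, mul_assoc, ← hv_def]
  have hA2w : SylWord X (altList t s (2 * k) ++ [v]) :=
    sylWord_append (sylWord_altList htS hsS _) (sylWord_singleton hvS)
  have hA2p : (altList t s (2 * k) ++ [v]).prod = g * y := by
    simp only [List.prod_append, List.prod_singleton, altProd_eq]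
    rw [hgyv]
  have hgym : sylLen X (g * y) = 2 * k + 1 := by
    refine le_antisymm (by simpa [altList_length] using sylLen_le hA2w hA2p) ?_
    by_contra hlt
    push_neg at hlt
    obtain ⟨D, hDw, hDp, hDl⟩ := exists_reduced _ hA2w hA2p
    have hp2 : (D ++ [y⁻¹]).prod = g := by
      rw [List.prod_append, List.prod_singleton, hDp, mul_inv_cancel_right]
    have hw2 : SylWord X (D ++ [y⁻¹]) := sylWord_append hDw (sylWord_singleton hyinvS)
    have hle2 : sylLen X g ≤ D.length + 1 := by simpa using sylLen_le hw2 hp2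
    rw [hlen] at hle2
    have hDl' : D.length = 2 * k := by omega
    have hred2 : Reduced X (D ++ [y⁻¹]) := ⟨hw2, by rw [hp2, hlen]; simp [hDl']⟩
    rcases gval _ hred2 hp2 y⁻¹ (by simp) with heq | heq
    · refine SMk' (-1) (-a) (by rw [zpow_neg, zpow_one]; exact inv_ne_one.mpr hy1)
        (by rw [zpow_neg, ← hs_def]; exact inv_ne_one.mpr ha) (Or.inr ?_)
      rw [zpow_neg, zpow_one, zpow_neg, ← hs_def, heq]
      exact mul_inv_cancel s
    · apply hY2
      have hyy : y = t := by rw [← htinv, ← heq, inv_inv]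
      rw [hyy]; exact ht2
  have hA2red : Reduced X (altList t s (2 * k) ++ [v]) :=
    ⟨hA2w, by rw [hA2p, hgym]; simp [altList_length]⟩
  -- the element Q = x * (g * y)
  have hW1w : SylWord X (x :: (altList t s (2 * k) ++ [v])) := sylWord_cons hxS hA2w
  have hW1p : (x :: (altList t s (2 * k) ++ [v])).prod = x * (g * y) := by
    rw [List.prod_cons, hA2p]
  have hQle : sylLen X (x * (g * y)) ≤ 2 * k + 2 := by
    simpa [altList_length] using sylLen_le hW1w hW1p
  have hQge : 2 * k ≤ sylLen X (x * (g * y)) := by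
    obtain ⟨D, hDw, hDp, hDl⟩ := exists_reduced _ hW1w hW1p
    have hp2 : (D ++ [y⁻¹]).prod = x * g := by
      rw [List.prod_append, List.prod_singleton, hDp]
      group
    have hle2 : sylLen X (x * g) ≤ D.length + 1 := by
      simpa using sylLen_le (sylWord_append hDw (sylWord_singleton hyinvS)) hp2
    rw [hxgm] at hle2
    omega
  rcases show sylLen X (x * (g * y)) = 2 * k ∨ sylLen X (x * (g * y)) = 2 * k + 1 ∨
      sylLen X (x * (g * y)) = 2 * k + 2 by omega with hq | hq | hq
  · -- Q has syllabic length m - 1 : impossible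
    obtain ⟨D, hDw, hDp, hDl⟩ := exists_reduced _ hW1w hW1p
    rw [hq] at hDl
    have hp2 : (D ++ [y⁻¹]).prod = x * g := by
      rw [List.prod_append, List.prod_singleton, hDp]
      group
    have hw2 : SylWord X (D ++ [y⁻¹]) := sylWord_append hDw (sylWord_singleton hyinvS)
    have hred2 : Reduced X (D ++ [y⁻¹]) := ⟨hw2, by rw [hp2, hxgm]; simp [hDl]⟩
    have hmem : y⁻¹ ∈ u :: altList t s (2 * k) :=
      ((entries_eq hPD hred2 hFred (hp2.trans hFp.symm)) y⁻¹).1 (by simp)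
    rcases List.mem_cons.1 hmem with heq | hmem2
    · refine SMk' (-1) (-(1 + a)) (by rw [zpow_neg, zpow_one]; exact inv_ne_one.mpr hy1)
        (by rw [zpow_neg, ← hu_pow]; exact inv_ne_one.mpr hu1) (Or.inr ?_)
      rw [zpow_neg, zpow_one, zpow_neg, ← hu_pow, heq]
      exact mul_inv_cancel u
    · rcases mem_altList _ _ _ _ hmem2 with heq | heq
      · apply hv1
        rw [hv_def, ← heq, inv_mul_cancel]
      · refine SMk' (-1) (-a) (by rw [zpow_neg, zpow_one]; exact inv_ne_one.mpr hy1)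
          (by rw [zpow_neg, ← hs_def]; exact inv_ne_one.mpr ha) (Or.inr ?_)
        rw [zpow_neg, zpow_one, zpow_neg, ← hs_def, heq]
        exact mul_inv_cancel s
  · -- Q has syllabic length m : the interesting case
    have parity_if : ∀ p' : ℕ, (if Even p' then t else s) = (if Even (p' + 1) then s else t) := by
      intro p'
      by_cases hp : Even p'
      · rw [if_pos hp, if_neg (by rw [Nat.even_add_one]; exact not_not_intro hp)]
      · rw [if_neg hp, if_pos (Nat.even_add_one.mpr hp)]
    have hget0 : (x :: (altList t s (2 * k) ++ [v]))[0]? = some x := by simp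
    have hgetmid : ∀ p, 1 ≤ p → p ≤ 2 * k →
        (x :: (altList t s (2 * k) ++ [v]))[p]? = some (if Even p then s else t) := by
      intro p h1 h2
      obtain ⟨p', rfl⟩ : ∃ p', p = p' + 1 := ⟨p - 1, by omega⟩
      rw [List.getElem?_cons_succ,
        List.getElem?_append_left (by rw [altList_length]; omega),
        altList_get? _ _ _ _ (by omega), parity_if]
    have hgetlast : (x :: (altList t s (2 * k) ++ [v]))[2 * k + 1]? = some v := by
      rw [List.getElem?_cons_succ,
        List.getElem?_append_right (by simp [altList_length])]
      simp [altList_length]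
    have hvalx : ∀ p, p ≤ 2 * k + 1 → Even p →
        ∃ c : ℤ, (x :: (altList t s (2 * k) ++ [v]))[p]? = some (x ^ c) ∧ x ^ c ≠ 1 := by
      intro p hp hev
      rcases Nat.eq_zero_or_pos p with rfl | hp1
      · exact ⟨1, by rw [zpow_one]; exact hget0, by rw [zpow_one]; exact hx1⟩
      · have hple : p ≤ 2 * k := by
          have := Nat.even_iff.mp hev; omega
        exact ⟨a, by rw [hgetmid p hp1 hple, if_pos hev, hs_def],
          by rw [← hs_def]; exact ha⟩
    have hvaly : ∀ p, p ≤ 2 * k + 1 → ¬ Even p →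
        ∃ c : ℤ, (x :: (altList t s (2 * k) ++ [v]))[p]? = some (y ^ c) ∧ y ^ c ≠ 1 := by
      intro p hp hev
      rcases eq_or_ne p (2 * k + 1) with rfl | hne
      · exact ⟨b + 1, by rw [← hv_pow]; exact hgetlast, by rw [← hv_pow]; exact hv1⟩
      · have h1 : 1 ≤ p := by
          rcases Nat.eq_zero_or_pos p with rfl | h
          · simp at hev
          · exact h
        have h2 : p ≤ 2 * k := by omega
        exact ⟨b, by rw [hgetmid p h1 h2, if_neg hev, ht_def], by rw [← ht_def]; exact hb⟩
    have hW1len : (x :: (altList t s (2 * k) ++ [v])).length = 2 * k + 2 := by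
      simp [altList_length]
    have hnotred : sylLen X ((x :: (altList t s (2 * k) ++ [v])).prod) ≠
        (x :: (altList t s (2 * k) ++ [v])).length := by
      rw [hW1p, hq, hW1len]; omega
    obtain ⟨w', hop⟩ := exists_mop hPD hW1w hnotred
    rcases hop with hopI | hopII
    · -- a type-I operation is impossible on W₁'
      obtain ⟨w₁, w₂, p, q', hpS, hq'S, hWeq, hor⟩ := hopI
      have hlW := congrArg List.length hWeq
      rw [hW1len] at hlW
      simp only [List.length_append, List.length_cons, List.length_nil] at hlW
      have hb0 := block_get hWeq 0 (by simp)
      have hb1 := block_get hWeq 1 (by simp)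
      rw [Nat.add_zero] at hb0
      have hb0' : (x :: (altList t s (2 * k) ++ [v]))[w₁.length]? = some p := by
        rw [hb0]; rfl
      have hb1' : (x :: (altList t s (2 * k) ++ [v]))[w₁.length + 1]? = some q' := by
        rw [hb1]; rfl
      have hpq : p * q' ∈ Syll X ∨ p * q' = 1 := by
        rcases hor with ⟨h1, _⟩ | ⟨h1, _⟩
        · exact Or.inl h1
        · exact Or.inr h1
      rcases Nat.even_or_odd w₁.length with hev | hodd
      · obtain ⟨c1, hc1, hc1'⟩ := hvalx w₁.length (by omega) hev
        obtain ⟨c2, hc2, hc2'⟩ := hvaly (w₁.length + 1) (by omega)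
          (by rw [Nat.even_add_one]; exact not_not_intro hev)
        have hpe : p = x ^ c1 := Option.some.inj (hb0'.symm.trans hc1)
        have hqe : q' = y ^ c2 := Option.some.inj (hb1'.symm.trans hc2)
        refine SMk c1 c2 hc1' hc2' ?_
        rw [← hpe, ← hqe]
        exact hpq
      · have hnev := Nat.not_even_iff_odd.mpr hodd
        obtain ⟨c1, hc1, hc1'⟩ := hvaly w₁.length (by omega) hnev
        obtain ⟨c2, hc2, hc2'⟩ := hvalx (w₁.length + 1) (by omega) (Nat.even_add_one.mpr hnev)
        have hpe : p = y ^ c1 := Option.some.inj (hb0'.symm.trans hc1)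
        have hqe : q' = x ^ c2 := Option.some.inj (hb1'.symm.trans hc2)
        refine SMk' c1 c2 hc1' hc2' ?_
        rw [← hpe, ← hqe]
        exact hpq
    · -- a type-II operation on W₁'
      obtain ⟨w₁, w₂, s', t', n, hs'S, ht'S, hn2, hrel, hsyl, hWeq, -⟩ := hopII
      have hlW := congrArg List.length hWeq
      rw [hW1len] at hlW
      simp only [List.length_append, altList_length] at hlW
      have e0 : (altList s' t' n)[0]? = some s' := by
        rw [altList_get? _ _ _ _ (by omega)]; norm_num
      have e1 : (altList s' t' n)[1]? = some t' := by
        rw [altList_get? _ _ _ _ (by omega)]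
        norm_num [Nat.even_iff]
      have hb0 := (block_get hWeq 0 (by rw [altList_length]; omega)).trans e0
      have hb1 := (block_get hWeq 1 (by rw [altList_length]; omega)).trans e1
      rw [Nat.add_zero] at hb0
      by_cases hi0 : w₁.length = 0
      · -- block begins at position 0
        rw [hi0] at hb0 hb1
        have hsx : s' = x := (Option.some.inj (hget0.symm.trans hb0)).symm
        by_cases hn3 : 3 ≤ n
        · -- then x = s, contradiction
          have e2 : (altList s' t' n)[2]? = some s' := by
            rw [altList_get? _ _ _ _ (by omega)]
            norm_num [Nat.even_iff]
          have hb2 := (block_get hWeq 2 (by rw [altList_length]; omega)).trans e2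
          rw [hi0] at hb2
          simp only [Nat.zero_add] at hb2
          have hmid2 := hgetmid 2 (by omega) (by omega)
          rw [hmid2] at hb2
          have h2x := Option.some.inj hb2
          rw [if_pos (by decide : Even 2)] at h2x
          exact hxns (by rw [← hsx, ← h2x])
        · -- n = 2 : CASE A, x commutes with t
          have hn2x : n = 2 := by omega
          simp only [Nat.zero_add] at hb1
          have hmid1 := hgetmid 1 (by omega) (by omega)
          rw [hmid1] at hb1
          have htt1 : t' = t := by
            have h := Option.some.inj hb1
            rw [if_neg (by decide : ¬ Even 1)] at h
            exact h.symm
          have hA : x * t = t * x := by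
            have hr := hrel
            rw [hn2x, hsx, htt1, altProd_two, altProd_two] at hr
            exact hr
          have hCxt : Commute x t := hA
          have hCxz : Commute x z := by rw [hz_def]; exact hCxs.mul_right hCxt
          have hxg_comm : x * g = g * x := by
            rw [hgz]
            exact ((hCxz.pow_right k).mul_right hCxs).eq
          have hg3 : g = altProd s t (2 * k) * s := by
            rw [hg_def, altProd_concat, if_pos hEk]
          have hG2w : SylWord X (altList s t (2 * k) ++ [u]) :=
            sylWord_append (sylWord_altList hsS htS _) (sylWord_singleton huS)
          have hG2p : (altList s t (2 * k) ++ [u]).prod = x * g := by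
            simp only [List.prod_append, List.prod_singleton, altProd_eq]
            rw [hxg_comm, hg3, mul_assoc, ← hCxs.eq, ← hu_def]
          have hG2red : Reduced X (altList s t (2 * k) ++ [u]) :=
            ⟨hG2w, by rw [hG2p, hxgm]; simp [altList_length]⟩
          have hchain := hPD.2 _ _ hFred hG2red (hFp.trans hG2p.symm)
          rcases Relation.ReflTransGen.cases_head hchain with heqFG | ⟨c, hstep, -⟩
          · -- the two words would be equal
            have h1 : (u :: altList t s (2 * k))[0]? = some u := by simp
            have h2 : (altList s t (2 * k) ++ [u])[0]? = some s := by
              rw [List.getElem?_append_left (by rw [altList_length]; omega),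
                altList_get? _ _ _ _ (by omega)]
              norm_num
            rw [heqFG, h2] at h1
            exact huns (Option.some.inj h1).symm
          · -- no type-II operation applies to F
            obtain ⟨w₁', w₂', s'', t'', n', hsS2, htS2, hn22, hrel2, hsyl2, hFeq, -⟩ := hstep
            have hFlen : (u :: altList t s (2 * k)).length = 2 * k + 1 := by
              simp [altList_length]
            have hlF := congrArg List.length hFeq
            rw [hFlen] at hlF
            simp only [List.length_append, altList_length, List.length_cons] at hlF
            have e0x : (altList s'' t'' n')[0]? = some s'' := by
              rw [altList_get? _ _ _ _ (by omega)]; norm_num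
            have e1x : (altList s'' t'' n')[1]? = some t'' := by
              rw [altList_get? _ _ _ _ (by omega)]
              norm_num [Nat.even_iff]
            have hc0 := (block_get hFeq 0 (by rw [altList_length]; omega)).trans e0x
            have hc1 := (block_get hFeq 1 (by rw [altList_length]; omega)).trans e1x
            rw [Nat.add_zero] at hc0
            have hFmid : ∀ p, 1 ≤ p → p ≤ 2 * k →
                (u :: altList t s (2 * k))[p]? = some (if Even p then s else t) := by
              intro p h1x h2x
              obtain ⟨p', rfl⟩ : ∃ p', p = p' + 1 := ⟨p - 1, by omega⟩
              rw [List.getElem?_cons_succ, altList_get? _ _ _ _ (by omega), parity_if]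
            by_cases hj0 : w₁'.length = 0
            · rw [hj0] at hc0 hc1
              have hsu : s'' = u := by
                have h0 : (u :: altList t s (2 * k))[0]? = some u := by simp
                exact (Option.some.inj (h0.symm.trans hc0)).symm
              by_cases hn3x : 3 ≤ n'
              · have e2x : (altList s'' t'' n')[2]? = some s'' := by
                  rw [altList_get? _ _ _ _ (by omega)]
                  norm_num [Nat.even_iff]
                have hc2 := (block_get hFeq 2 (by rw [altList_length]; omega)).trans e2x
                rw [hj0] at hc2
                simp only [Nat.zero_add] at hc2
                rw [hFmid 2 (by omega) (by omega)] at hc2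
                have h2x := Option.some.inj hc2
                rw [if_pos (by decide : Even 2)] at h2x
                refine huns ?_
                rw [hsu] at h2x
                exact h2x.symm
              · have hn2y : n' = 2 := by omega
                simp only [Nat.zero_add] at hc1
                rw [hFmid 1 (by omega) (by omega)] at hc1
                have htu : t'' = t := by
                  have h := Option.some.inj hc1
                  rw [if_neg (by decide : ¬ Even 1)] at h
                  exact h.symm
                have hut : u * t = t * u := by
                  have hr := hrel2
                  rw [hn2y, hsu, htu, altProd_two, altProd_two] at hr
                  exact hr
                apply hstne
                have hx2 : x * (s * t) = x * (t * s) := by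
                  calc x * (s * t) = u * t := by rw [hu_def]; group
                  _ = t * u := hut
                  _ = (t * x) * s := by rw [hu_def]; group
                  _ = (x * t) * s := by rw [hA]
                  _ = x * (t * s) := by group
                exact mul_left_cancel hx2
            · -- interior block in F : contradicts hR
              have hj1 : 1 ≤ w₁'.length := by omega
              have hse := Option.some.inj
                ((hFmid w₁'.length hj1 (by omega)).symm.trans hc0)
              have hte := Option.some.inj
                ((hFmid (w₁'.length + 1) (by omega) (by omega)).symm.trans hc1)
              rcases Nat.even_or_odd w₁'.length with hev' | hodd'
              · rw [if_pos hev'] at hse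
                rw [if_neg (by rw [Nat.even_add_one]; exact not_not_intro hev')] at hte
                exact hR n' hn22 (by omega) (by rw [hse, hte]; exact hrel2)
              · have hnev' := Nat.not_even_iff_odd.mpr hodd'
                rw [if_neg hnev'] at hse
                rw [if_pos (Nat.even_add_one.mpr hnev')] at hte
                exact hR n' hn22 (by omega) (by rw [hte, hse]; exact hrel2.symm)
      · -- block does not begin at position 0
        have hi1 : 1 ≤ w₁.length := by omega
        by_cases hend : w₁.length + n = 2 * k + 2
        · -- the block reaches the last position
          by_cases hilast : w₁.length = 2 * k
          · -- n = 2 : CASE B, s commutes with v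
            have hn2x : n = 2 := by omega
            rw [hilast] at hb0 hb1
            have hse : s' = s := by
              have h := Option.some.inj ((hgetmid (2 * k) (by omega) le_rfl).symm.trans hb0)
              rw [if_pos hEk] at h
              exact h.symm
            have hte : t' = v := (Option.some.inj (hgetlast.symm.trans hb1)).symm
            have hB : s * v = v * s := by
              have hr := hrel
              rw [hn2x, hse, hte, altProd_two, altProd_two] at hr
              exact hr
            have htv : t * v = y := by rw [hv_def, ← mul_assoc, ht2, one_mul]
            have hnE1 : ¬ Even (2 * k - 1) := by rw [Nat.even_iff]; omega
            have hE2 : Even (2 * k - 2) := by rw [Nat.even_iff]; omega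
            have hd1 : altList t s (2 * k) = altList t s (2 * k - 1) ++ [s] := by
              conv_lhs => rw [show 2 * k = (2 * k - 1) + 1 by omega]
              rw [altList_concat, if_neg hnE1]
            have hd2 : altList t s (2 * k - 1) = altList t s (2 * k - 2) ++ [t] := by
              conv_lhs => rw [show 2 * k - 1 = (2 * k - 2) + 1 by omega]
              rw [altList_concat, if_pos hE2]
            have hp1 : altProd t s (2 * k) = altProd t s (2 * k - 2) * t * s := by
              have h1 : (altList t s (2 * k)).prod =
                  ((altList t s (2 * k - 2) ++ [t]) ++ [s]).prod := by rw [← hd2, ← hd1]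
              simpa [List.prod_append, mul_assoc] using h1
            have hA2w' : SylWord X (altList t s (2 * k - 2) ++ [t, v] ++ [s]) := by
              refine sylWord_append (sylWord_append (sylWord_altList htS hsS _) ?_)
                (sylWord_singleton hsS)
              exact sylWord_cons htS (sylWord_singleton hvS)
            have hA2p' : (altList t s (2 * k - 2) ++ [t, v] ++ [s]).prod = g * y := by
              simp only [List.prod_append, List.prod_cons, List.prod_singleton,
                List.prod_nil, mul_one, altProd_eq]
              rw [hgyv, hp1]
              calc altProd t s (2 * k - 2) * (t * v) * s
                  = altProd t s (2 * k - 2) * (t * (v * s)) := by group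
                _ = altProd t s (2 * k - 2) * (t * (s * v)) := by rw [hB]
                _ = altProd t s (2 * k - 2) * t * s * v := by group
            refine absurd ?_ (merge_not_min hPD (altList t s (2 * k - 2)) [s] t v hA2w'
              (Or.inl (by rw [htv]; exact hyS)))
            rw [hA2p', hgym]
            simp only [List.length_append, altList_length, List.length_cons, List.length_nil]
            omega
          · -- the block would contain v strictly inside : impossible
            have hlastj : (altList s' t' n)[n - 1]? =
                some (if Even (n - 1) then s' else t') :=
              altList_get? _ _ _ _ (by omega)
            have hbl := (block_get hWeq (n - 1) (by rw [altList_length]; omega)).trans hlastj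
            rw [show w₁.length + (n - 1) = 2 * k + 1 by omega, hgetlast] at hbl
            have hvval := Option.some.inj hbl
            have hsmem : s' = s ∨ s' = t := by
              have h := Option.some.inj ((hgetmid w₁.length hi1 (by omega)).symm.trans hb0)
              by_cases hev : Even w₁.length
              · rw [if_pos hev] at h; exact Or.inl h.symm
              · rw [if_neg hev] at h; exact Or.inr h.symm
            have htmem : t' = s ∨ t' = t := by
              have h := Option.some.inj
                ((hgetmid (w₁.length + 1) (by omega) (by omega)).symm.trans hb1)
              by_cases hev : Even (w₁.length + 1)
              · rw [if_pos hev] at h; exact Or.inl h.symm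
              · rw [if_neg hev] at h; exact Or.inr h.symm
            by_cases hevn : Even (n - 1)
            · rw [if_pos hevn] at hvval
              rcases hsmem with h | h
              · exact hvns (hvval.trans h)
              · exact hvnt (hvval.trans h)
            · rw [if_neg hevn] at hvval
              rcases htmem with h | h
              · exact hvns (hvval.trans h)
              · exact hvnt (hvval.trans h)
        · -- the block is interior : contradicts hR
          have hse := Option.some.inj ((hgetmid w₁.length hi1 (by omega)).symm.trans hb0)
          have hte := Option.some.inj
            ((hgetmid (w₁.length + 1) (by omega) (by omega)).symm.trans hb1)
          rcases Nat.even_or_odd w₁.length with hev | hodd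
          · rw [if_pos hev] at hse
            rw [if_neg (by rw [Nat.even_add_one]; exact not_not_intro hev)] at hte
            exact hR n hn2 (by omega) (by rw [hse, hte]; exact hrel)
          · have hnev := Nat.not_even_iff_odd.mpr hodd
            rw [if_neg hnev] at hse
            rw [if_pos (Nat.even_add_one.mpr hnev)] at hte
            exact hR n hn2 (by omega) (by rw [hte, hse]; exact hrel.symm)
  · -- Q has syllabic length m + 1 : impossible
    have hW1red : Reduced X (x :: (altList t s (2 * k) ++ [v])) :=
      ⟨hW1w, by rw [hW1p, hq]; simp [altList_length]⟩
    have hW2w : SylWord X (u :: (altList t s (2 * k) ++ [y])) :=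
      sylWord_cons huS (sylWord_append (sylWord_altList htS hsS _) (sylWord_singleton hyS))
    have hW2p : (u :: (altList t s (2 * k) ++ [y])).prod = x * (g * y) := by
      simp only [List.prod_cons, List.prod_append, List.prod_singleton, List.prod_nil,
        mul_one, altProd_eq]
      rw [hu_def, hg1]
      group
    have hW2red : Reduced X (u :: (altList t s (2 * k) ++ [y])) :=
      ⟨hW2w, by rw [hW2p, hq]; simp [altList_length]⟩
    have hmem : x ∈ u :: (altList t s (2 * k) ++ [y]) :=
      ((entries_eq hPD hW1red hW2red (hW1p.trans hW2p.symm)) x).1 (by simp)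
    rcases List.mem_cons.1 hmem with heq | hmem2
    · have hxsu : x * s = x := by rw [← hu_def, heq]
      exact ha (mul_eq_left.mp hxsu)
    · rcases List.mem_append.1 hmem2 with hmem3 | hmem3
      · rcases mem_altList _ _ _ _ hmem3 with heq | heq
        · refine SMk 1 (-b) (by rw [zpow_one]; exact hx1)
            (by rw [zpow_neg, ← ht_def]; exact inv_ne_one.mpr hb) (Or.inr ?_)
          rw [zpow_one, zpow_neg, ← ht_def, heq]
          exact mul_inv_cancel t
        · exact hxns heq
      · exact hxy (List.mem_singleton.1 hmem3)
end Paper
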